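/- Let S be a string of length n whose last character occurs at no other position of S, let a be a character with a ≠ S[n], and let w be a nonempty string with occ_S(w) = 1 and occ_{aS}(w) ≥ 2. Then w is a prefix of aS and occ_{aS}(w) = 2. Moreover, letting i be the starting position of the unique occurrence of w in S, we have i + |w| ≤ n, and: if S[i+|w|] ≠ S[|w|], then Φ_{aS}(w) = {(d, S[i+|w|])}, where d = S[i−1] if i ≥ 2 and d = a if i = 1; and if S[i+|w|] = S[|w|], then Φ_{aS}(w) = ∅. -/

import Mathlib

variable {Γ : Type*} [DecidableEq Γ]

/-- `occ S w` is the number of occurrences of `w` as a contiguous substring of `S`,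
i.e., the number of (0-based) indices `i` with `S[i..i+|w|-1] = w`. -/
def occ (S w : List Γ) : ℕ :=
  ((List.range S.length).filter fun i => (S.drop i).take w.length = w).length

/-- `Phi S w` is the set of pairs `(α, β)` of characters such that
`occ S (αwβ) = occ S (αw) = occ S (wβ) = 1`. -/
def Phi (S w : List Γ) : Set (Γ × Γ) :=
  {p | occ S (p.1 :: (w ++ [p.2])) = 1 ∧ occ S (p.1 :: w) = 1 ∧ occ S (w ++ [p.2]) = 1}

/-- The net frequency of `w` in `S`. -/
noncomputable def phi (S w : List Γ) : ℕ := (Phi S w).ncard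

set_option linter.unusedSectionVars false
set_option maxHeartbeats 1000000

lemma occ_eq_card (S w : List Γ) :
    occ S w = ((Finset.range S.length).filter fun i => (S.drop i).take w.length = w).card := rfl

lemma pat_le {S w : List Γ} (hw : w ≠ []) {i : ℕ} (h : (S.drop i).take w.length = w) :
    i + w.length ≤ S.length := by
  have h1 : ((S.drop i).take w.length).length = w.length := by rw [h]
  simp [List.length_take, List.length_drop] at h1
  have : 0 < w.length := List.length_pos_iff.mpr hw
  omega

lemma pat_get {L u : List Γ} {i : ℕ} (h : (L.drop i).take u.length = u) {k : ℕ}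
    (hk : k < u.length) : L[i + k]? = u[k]? := by
  conv_rhs => rw [← h]
  rw [List.getElem?_take_of_lt hk, List.getElem?_drop]

lemma pat_append {L w : List Γ} {β : Γ} {i : ℕ} :
    (L.drop i).take (w ++ [β]).length = w ++ [β] ↔
      (L.drop i).take w.length = w ∧ L[i + w.length]? = some β := by
  have hlen : (w ++ [β]).length = w.length + 1 := by simp
  rw [hlen]
  constructor
  · intro h
    have hw : (L.drop i).take w.length = w := by
      have := congrArg (List.take w.length) h
      simpa [List.take_take, List.take_left'] using this
    refine ⟨hw, ?_⟩
    rw [List.take_succ, hw] at h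
    have := List.append_cancel_left h
    rw [← List.getElem?_drop]
    cases h' : (L.drop i)[w.length]? <;> simp_all
  · rintro ⟨h1, h2⟩
    rw [← List.getElem?_drop] at h2
    rw [List.take_succ, h1, h2]
    rfl

lemma pat_cons {L w : List Γ} {α : Γ} {i : ℕ} :
    (L.drop i).take (α :: w).length = α :: w ↔
      L[i]? = some α ∧ (L.drop (i + 1)).take w.length = w := by
  rw [List.length_cons]
  cases h : L.drop i with
  | nil =>
    have hle : L.length ≤ i := by rwa [List.drop_eq_nil_iff] at h
    simp [List.getElem?_eq_none (by omega : L.length ≤ i),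
      List.drop_eq_nil_of_le (by omega : L.length ≤ i + 1)]
  | cons x xs =>
    have hx : L[i]? = some x := by
      have : (L.drop i)[0]? = L[i + 0]? := List.getElem?_drop
      simp [h] at this; simpa using this.symm
    have hxs : L.drop (i + 1) = xs := by
      have : L.drop (i+1) = (L.drop i).drop 1 := by rw [List.drop_drop]
      rw [this, h]; rfl
    simp [hx, hxs, List.take_cons]

lemma occ_cons (a : Γ) (S w : List Γ) :
    occ (a :: S) w = occ S w + (if ((a :: S)).take w.length = w then 1 else 0) := by
  unfold occ
  rw [← List.countP_eq_length_filter, ← List.countP_eq_length_filter]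
  rw [List.length_cons, List.range_succ_eq_map, List.countP_cons, List.countP_map]
  simp only [List.drop_zero]
  congr 1
  simp

lemma getElem?_eq_some_getD {l : List Γ} {n : ℕ} (h : n < l.length) (d : Γ) :
    l[n]? = some (l.getD n d) := by
  rw [List.getD_eq_getElem?_getD, List.getElem?_eq_getElem h]; rfl

lemma card_eq_one' {n k : ℕ} (hk : k < n) {Q : ℕ → Prop} [DecidablePred Q]
    (h : ∀ j, Q j ↔ j = k) : ((Finset.range n).filter Q).card = 1 := by
  have : (Finset.range n).filter Q = {k} := by
    ext j; simp only [Finset.mem_filter, Finset.mem_range, Finset.mem_singleton, h]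
    constructor <;> intro h' <;> omega
  rw [this]; rfl

lemma card_eq_zero' {n : ℕ} {Q : ℕ → Prop} [DecidablePred Q]
    (h : ∀ j, ¬ Q j) : ((Finset.range n).filter Q).card = 0 := by
  have : (Finset.range n).filter Q = ∅ := by
    ext j; simp [h]
  rw [this]; rfl

lemma card_eq_two' {n k₁ k₂ : ℕ} (h₁ : k₁ < n) (h₂ : k₂ < n) (hne : k₁ ≠ k₂)
    {Q : ℕ → Prop} [DecidablePred Q] (h : ∀ j, Q j ↔ j = k₁ ∨ j = k₂) :
    ((Finset.range n).filter Q).card = 2 := by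
  have : (Finset.range n).filter Q = {k₁, k₂} := by
    ext j; simp [h, Finset.mem_filter]; omega
  rw [this, Finset.card_pair hne]

/-- Let `S = T ++ [c]` with the last character `c` occurring at no other
position (`c ∉ T`), let `a ≠ c`, and let `w` be nonempty with `occ S w = 1` and
`occ (a :: S) w ≥ 2`. Then `w` is a prefix of `a :: S` and `occ (a :: S) w = 2`.
Moreover, for the (unique) 0-based starting position `i₀` of `w` in `S`
(1-based position `i = i₀ + 1`), we have `i₀ + |w| < |S|` (i.e. `i + |w| ≤ n`), and:
if `S[i+|w|] ≠ S[|w|]` (0-based: `S.getD (i₀ + |w|) a ≠ S.getD (|w| - 1) a`) then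
`Phi (a :: S) w = {(d, S[i+|w|])}` where `d = a` if `i₀ = 0` and `d = S[i-1]`
(0-based `S.getD (i₀ - 1) a`) otherwise; and if `S[i+|w|] = S[|w|]` then
`Phi (a :: S) w = ∅`. -/
theorem stmt10 (S T : List Γ) (c : Γ) (hS : S = T ++ [c]) (hc : c ∉ T)
    (a : Γ) (ha : a ≠ c)
    (w : List Γ) (hw : w ≠ []) (h1 : occ S w = 1) (h2 : 2 ≤ occ (a :: S) w) :
    w <+: (a :: S) ∧ occ (a :: S) w = 2 ∧
    ∀ i₀ : ℕ, (S.drop i₀).take w.length = w →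
      i₀ + w.length < S.length ∧
      (S.getD (i₀ + w.length) a ≠ S.getD (w.length - 1) a →
        Phi (a :: S) w =
          {((if i₀ = 0 then a else S.getD (i₀ - 1) a), S.getD (i₀ + w.length) a)}) ∧
      (S.getD (i₀ + w.length) a = S.getD (w.length - 1) a →
        Phi (a :: S) w = ∅) := by
  have hwpos : 0 < w.length := List.length_pos_iff.mpr hw
  -- prefix and occ = 2
  have hocc := occ_cons a S w
  rw [h1] at hocc
  have hpre : (a :: S).take w.length = w := by
    by_contra h
    rw [if_neg h] at hocc
    omega
  have hocc2 : occ (a :: S) w = 2 := by rw [hocc, if_pos hpre]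
  refine ⟨List.prefix_iff_eq_take.mpr hpre.symm, hocc2, ?_⟩
  -- uniqueness of occurrence in S
  obtain ⟨i₁, hi₁⟩ := List.length_eq_one_iff.mp h1
  have huniq : ∀ j, (S.drop j).take w.length = w → j = i₁ := by
    intro j hj
    have hjlt : j < S.length := by have := pat_le hw hj; omega
    have : j ∈ (List.range S.length).filter fun i => (S.drop i).take w.length = w := by
      simp [List.mem_filter, List.mem_range, hjlt, hj]
    rw [hi₁] at this
    simpa using this
  have hpat₁ : (S.drop i₁).take w.length = w := by
    have : i₁ ∈ (List.range S.length).filter fun i => (S.drop i).take w.length = w := by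
      rw [hi₁]; simp
    rw [List.mem_filter] at this
    simpa using this.2
  intro i₀ hpat
  have hi₀ : i₀ = i₁ := huniq i₀ hpat
  subst hi₀
  clear hpat₁
  have hle : i₀ + w.length ≤ S.length := pat_le hw hpat
  have hi₀lt : i₀ < S.length := by omega
  -- strict inequality
  have hlt : i₀ + w.length < S.length := by
    by_contra hcon
    have heq : i₀ + w.length = S.length := by omega
    -- last char of w is c
    have hlast : w[w.length - 1]? = some c := by
      have := pat_get hpat (show w.length - 1 < w.length by omega)
      rw [← this]
      have : i₀ + (w.length - 1) = S.length - 1 := by omega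
      rw [this, hS]
      simp [List.getElem?_append_right, List.length_append]
    -- from prefix
    have hpre' : (a :: S)[w.length - 1]? = some c := by
      have := pat_get (i := 0) (by simpa using hpre) (show w.length - 1 < w.length by omega)
      simp at this
      rw [this, hlast]
    rcases Nat.eq_or_lt_of_le hwpos with h1' | h1'
    · -- w.length = 1
      have : (a :: S)[0]? = some c := by simpa [← h1'] using hpre'
      simp at this
      exact ha this
    · -- w.length ≥ 2
      have hwl : w.length - 1 = (w.length - 2) + 1 := by omega
      rw [hwl] at hpre'
      have : S[w.length - 2]? = some c := by simpa using hpre'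
      have hlt2 : w.length - 2 < T.length := by
        have : S.length = T.length + 1 := by rw [hS]; simp
        omega
      rw [hS, List.getElem?_append_left hlt2] at this
      exact hc (by
        have := List.mem_of_getElem? this
        exact this)
  set d := (if i₀ = 0 then a else S.getD (i₀ - 1) a) with hd
  set e₁ := S.getD (w.length - 1) a with he₁def
  set e₂ := S.getD (i₀ + w.length) a with he₂def
  -- getElem? facts
  have hgd : (a :: S)[i₀]? = some d := by
    rcases Nat.eq_zero_or_pos i₀ with h0 | h0
    · subst h0; simp [hd]
    · obtain ⟨k, rfl⟩ : ∃ k, i₀ = k + 1 := ⟨i₀ - 1, by omega⟩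
      rw [List.getElem?_cons_succ, hd]
      rw [if_neg (by omega)]
      exact getElem?_eq_some_getD (by omega) a
  have hge₁ : (a :: S)[0 + w.length]? = some e₁ := by
    have hwl : 0 + w.length = (w.length - 1) + 1 := by omega
    rw [hwl, List.getElem?_cons_succ]
    exact getElem?_eq_some_getD (by omega) a
  have hge₂ : (a :: S)[(i₀ + 1) + w.length]? = some e₂ := by
    have : (i₀ + 1) + w.length = (i₀ + w.length) + 1 := by omega
    rw [this, List.getElem?_cons_succ]
    exact getElem?_eq_some_getD (by omega) a
  -- occurrence characterizations in a :: S
  have hdropS : ∀ j : ℕ, (a :: S).drop (j + 1) = S.drop j := fun j => rfl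
  have hwpat : ∀ j, ((a :: S).drop j).take w.length = w ↔ (j = 0 ∨ j = i₀ + 1) := by
    intro j
    constructor
    · intro h
      match j with
      | 0 => exact Or.inl rfl
      | k + 1 =>
        rw [hdropS] at h
        exact Or.inr (by rw [huniq k h])
    · rintro (rfl | rfl)
      · simpa using hpre
      · rw [hdropS]; exact hpat
  have hαw : ∀ (α : Γ) (j : ℕ),
      ((a :: S).drop j).take (α :: w).length = α :: w ↔ (j = i₀ ∧ α = d) := by
    intro α j
    rw [pat_cons, hdropS]
    constructor
    · rintro ⟨hg, hp⟩
      have hj : j = i₀ := huniq j hp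
      subst hj
      rw [hgd] at hg
      exact ⟨rfl, (Option.some_inj.mp hg).symm⟩
    · rintro ⟨rfl, rfl⟩
      rw [hgd]
      exact ⟨rfl, hpat⟩
  have hwβ : ∀ (β : Γ) (j : ℕ),
      ((a :: S).drop j).take (w ++ [β]).length = w ++ [β] ↔
        ((j = 0 ∧ β = e₁) ∨ (j = i₀ + 1 ∧ β = e₂)) := by
    intro β j
    rw [pat_append]
    constructor
    · rintro ⟨hp, hg⟩
      rcases (hwpat j).mp hp with rfl | rfl
      · rw [hge₁] at hg
        exact Or.inl ⟨rfl, (Option.some_inj.mp hg).symm⟩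
      · rw [hge₂] at hg
        exact Or.inr ⟨rfl, (Option.some_inj.mp hg).symm⟩
    · rintro (⟨rfl, rfl⟩ | ⟨rfl, rfl⟩)
      · exact ⟨(hwpat 0).mpr (Or.inl rfl), hge₁⟩
      · exact ⟨(hwpat _).mpr (Or.inr rfl), hge₂⟩
  have hαwβ : ∀ (α β : Γ) (j : ℕ),
      ((a :: S).drop j).take (α :: (w ++ [β])).length = α :: (w ++ [β]) ↔
        (j = i₀ ∧ α = d ∧ β = e₂) := by
    intro α β j
    rw [pat_cons, hdropS]
    constructor
    · rintro ⟨hg, hp⟩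
      rcases (hwβ β (j + 1)).mp (by simpa [hdropS] using hp) with ⟨h0, _⟩ | ⟨hj, rfl⟩
      · omega
      · have : j = i₀ := by omega
        subst this
        rw [hgd] at hg
        exact ⟨rfl, (Option.some_inj.mp hg).symm, rfl⟩
    · rintro ⟨rfl, rfl, rfl⟩
      refine ⟨by rw [hgd], ?_⟩
      have := (hwβ e₂ _).mpr (Or.inr ⟨rfl, rfl⟩)
      simpa [hdropS] using this
  -- occ values
  have len_cons : (a :: S).length = S.length + 1 := rfl
  have occ_αw : ∀ α : Γ, occ (a :: S) (α :: w) = if α = d then 1 else 0 := by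
    intro α
    rw [occ_eq_card, len_cons]
    by_cases hα : α = d
    · rw [if_pos hα]
      refine card_eq_one' (k := i₀) (by omega) (fun j => ?_)
      rw [hαw]; simp [hα]
    · rw [if_neg hα]
      exact card_eq_zero' (fun j h => hα ((hαw α j).mp h).2)
  have occ_wβ : ∀ β : Γ, occ (a :: S) (w ++ [β]) =
      (if β = e₁ then 1 else 0) + (if β = e₂ then 1 else 0) := by
    intro β
    rw [occ_eq_card, len_cons]
    by_cases hβ₁ : β = e₁ <;> by_cases hβ₂ : β = e₂
    · rw [if_pos hβ₁, if_pos hβ₂]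
      refine card_eq_two' (k₁ := 0) (k₂ := i₀ + 1) (by omega) (by omega) (by omega)
        (fun j => ?_)
      rw [hwβ]
      constructor
      · rintro (⟨rfl, _⟩ | ⟨rfl, _⟩)
        exacts [Or.inl rfl, Or.inr rfl]
      · rintro (rfl | rfl)
        exacts [Or.inl ⟨rfl, hβ₁⟩, Or.inr ⟨rfl, hβ₂⟩]
    · rw [if_pos hβ₁, if_neg hβ₂]
      refine card_eq_one' (k := 0) (by omega) (fun j => ?_)
      rw [hwβ]
      constructor
      · rintro (⟨rfl, _⟩ | ⟨rfl, h'⟩)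
        exacts [rfl, absurd h' hβ₂]
      · rintro rfl
        exact Or.inl ⟨rfl, hβ₁⟩
    · rw [if_neg hβ₁, if_pos hβ₂]
      refine card_eq_one' (k := i₀ + 1) (by omega) (fun j => ?_)
      rw [hwβ]
      constructor
      · rintro (⟨rfl, h'⟩ | ⟨rfl, _⟩)
        exacts [absurd h' hβ₁, rfl]
      · rintro rfl
        exact Or.inr ⟨rfl, hβ₂⟩
    · rw [if_neg hβ₁, if_neg hβ₂]
      exact card_eq_zero' (fun j h => by
        rcases (hwβ β j).mp h with ⟨_, h'⟩ | ⟨_, h'⟩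
        exacts [hβ₁ h', hβ₂ h'])
  have occ_αwβ : ∀ α β : Γ, occ (a :: S) (α :: (w ++ [β])) =
      if α = d ∧ β = e₂ then 1 else 0 := by
    intro α β
    rw [occ_eq_card, len_cons]
    by_cases hαβ : α = d ∧ β = e₂
    · rw [if_pos hαβ]
      refine card_eq_one' (k := i₀) (by omega) (fun j => ?_)
      rw [hαwβ]; simp [hαβ.1, hαβ.2]
    · rw [if_neg hαβ]
      exact card_eq_zero' (fun j h => by
        obtain ⟨_, h₁, h₂⟩ := (hαwβ α β j).mp h
        exact hαβ ⟨h₁, h₂⟩)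
  refine ⟨hlt, ?_, ?_⟩
  · -- e₂ ≠ e₁ case
    intro hne
    ext ⟨α, β⟩
    simp only [Phi, Set.mem_setOf_eq, Set.mem_singleton_iff, Prod.mk.injEq,
      occ_αw, occ_wβ, occ_αwβ]
    constructor
    · rintro ⟨h₃, _, _⟩
      by_cases hαβ : α = d ∧ β = e₂
      · exact hαβ
      · rw [if_neg hαβ] at h₃; omega
    · rintro ⟨rfl, rfl⟩
      refine ⟨by simp, by simp, ?_⟩
      rw [if_neg hne, if_pos rfl]
  · -- e₂ = e₁ case
    intro heq
    ext ⟨α, β⟩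
    simp only [Phi, Set.mem_setOf_eq, Set.mem_empty_iff_false, iff_false, not_and,
      occ_αw, occ_wβ, occ_αwβ]
    intro h₃ _
    by_cases hαβ : α = d ∧ β = e₂
    · rw [hαβ.2, heq, if_pos rfl]
      omega
    · rw [if_neg hαβ] at h₃
      omega
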